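/- (Theorem 3.1, equation (3.9.1): limiting current) For every ε > 0 there exists L > 4 such that for every ℓ > L and every stationary solution (j, m) on [0, ℓ], one has |ℓ j − tanh(βλ/2)| < ε. -/

import Mathlib

open Real Set

/-- The force profile `g(x) = ∫_{x-1}^x 1_{y ≤ ℓ/2} dy − ∫_x^{x+1} 1_{y ≤ ℓ/2} dy`. -/
noncomputable def gfun (ℓ : ℝ) (x : ℝ) : ℝ :=
  (∫ y in (x - 1)..x, if y ≤ ℓ / 2 then (1 : ℝ) else 0) -
  (∫ y in x..(x + 1), if y ≤ ℓ / 2 then (1 : ℝ) else 0)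

/-- An IVP solution with parameter `j`: a differentiable `m` on `[0, ℓ]` with `m 0 = 0`
and `m'(x) = -2j + βλ(1 - m(x)²) g(x)` on `[0, ℓ]`. -/
def IsIVPSolution (β lam ℓ j : ℝ) (m : ℝ → ℝ) : Prop :=
  m 0 = 0 ∧ ∀ x ∈ Icc (0 : ℝ) ℓ,
    HasDerivAt m (-2 * j + β * lam * (1 - m x ^ 2) * gfun ℓ x) x

/-- A stationary solution: an IVP solution which also satisfies `m ℓ = 0`. -/
def IsStationarySolution (β lam ℓ j : ℝ) (m : ℝ → ℝ) : Prop :=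
  IsIVPSolution β lam ℓ j m ∧ m ℓ = 0

set_option maxHeartbeats 1000000

open Filter Topology
lemma ind_integral (c a b : ℝ) (hab : a ≤ b) :
    ∫ y in a..b, (if y ≤ c then (1:ℝ) else 0) = min b c - min a c := by
  have hfun : (fun y => if y ≤ c then (1:ℝ) else 0) = (Iic c).indicator (fun _ => (1:ℝ)) := by
    funext y; simp [Set.indicator, Set.mem_Iic]
  rw [intervalIntegral.integral_of_le hab, hfun,
    MeasureTheory.setIntegral_indicator measurableSet_Iic]
  have hset : Ioc a b ∩ Iic c = Ioc a (min b c) := by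
    ext y; simp only [mem_inter_iff, mem_Ioc, mem_Iic, le_min_iff]; tauto
  rw [hset, MeasureTheory.setIntegral_const, MeasureTheory.measureReal_def, Real.volume_Ioc, smul_eq_mul, mul_one]
  rcases le_total a c with h | h
  · rw [min_eq_left h, ENNReal.toReal_ofReal (by simp [le_min_iff]; exact ⟨hab, h⟩)]
  · rw [min_eq_right h, min_eq_right (h.trans hab),
      ENNReal.ofReal_eq_zero.mpr (by linarith)]
    simp

lemma gfun_eq_min (ℓ x : ℝ) :
    gfun ℓ x = 2 * min x (ℓ/2) - min (x-1) (ℓ/2) - min (x+1) (ℓ/2) := by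
  unfold gfun
  rw [ind_integral (ℓ/2) (x-1) x (by linarith), ind_integral (ℓ/2) x (x+1) (by linarith)]
  ring

lemma gfun_eq_max (ℓ x : ℝ) : gfun ℓ x = max 0 (1 - |x - ℓ/2|) := by
  rw [gfun_eq_min]
  set c := ℓ/2
  rcases le_total x (c-1) with h1 | h1
  · rw [min_eq_left (by linarith), min_eq_left (by linarith), min_eq_left (by linarith),
      abs_of_nonpos (by linarith), max_eq_left (by linarith [abs_nonneg (x - c)])]
    · ring
  · rcases le_total x c with h2 | h2
    · rw [min_eq_left (by linarith), min_eq_left (by linarith), min_eq_right (by linarith),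
        abs_of_nonpos (by linarith), max_eq_right (by linarith)]
      ring
    · rcases le_total x (c+1) with h3 | h3
      · rw [min_eq_right h2, min_eq_left (by linarith), min_eq_right (by linarith),
          abs_of_nonneg (by linarith), max_eq_right (by linarith)]
        ring
      · rw [min_eq_right h2, min_eq_right (by linarith), min_eq_right (by linarith),
          abs_of_nonneg (by linarith), max_eq_left (by linarith)]
        ring

lemma hasDerivAt_mul_abs (t : ℝ) : HasDerivAt (fun u : ℝ => u * |u|) (2 * |t|) t := by
  rcases lt_trichotomy t 0 with h | h | h
  · have h' : HasDerivAt (fun u : ℝ => -(u * u)) (2 * |t|) t := by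
      have h2 : HasDerivAt (fun u : ℝ => -(u * u)) (-(1 * t + t * 1)) t :=
        ((hasDerivAt_id t).mul (hasDerivAt_id t)).neg
      convert h2 using 1
      rw [abs_of_neg h]; ring
    apply h'.congr_of_eventuallyEq
    filter_upwards [Iio_mem_nhds h] with u hu
    rw [abs_of_neg hu]; ring
  · subst h
    rw [hasDerivAt_iff_tendsto_slope]
    have h2 : Filter.Tendsto (fun u : ℝ => |u|) (nhdsWithin 0 {(0:ℝ)}ᶜ) (nhds (2 * |(0:ℝ)|)) := by
      have := (continuous_abs.tendsto (0:ℝ)).mono_left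
        (nhdsWithin_le_nhds (s := {(0:ℝ)}ᶜ))
      simpa using this
    apply h2.congr'
    filter_upwards [self_mem_nhdsWithin] with u hu
    have hu' : (u:ℝ) ≠ 0 := hu
    simp only [slope, vsub_eq_sub, sub_zero, smul_eq_mul]
    field_simp
    simp
  · have h' : HasDerivAt (fun u : ℝ => u * u) (2 * |t|) t := by
      have h2 : HasDerivAt (fun u : ℝ => u * u) (1 * t + t * 1) t :=
        (hasDerivAt_id t).mul (hasDerivAt_id t)
      convert h2 using 1
      rw [abs_of_pos h]; ring
    apply h'.congr_of_eventuallyEq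
    filter_upwards [Ioi_mem_nhds h] with u hu
    rw [abs_of_pos hu]

noncomputable def Ffun (c x : ℝ) : ℝ := c*x - c^2/2 + ((x-c)^2 - (x-c)*|x-c|)/4

lemma hasDerivAt_Ffun (c x : ℝ) : HasDerivAt (Ffun c) (min x c) x := by
  have h1 : HasDerivAt (fun x : ℝ => (x - c) * |x - c|) (2 * |x - c|) x := by
    have := (hasDerivAt_mul_abs (x - c)).comp x ((hasDerivAt_id x).sub_const c)
    have h' : HasDerivAt (fun x : ℝ => (x - c) * |x - c|) (2 * |x - c| * 1) x := this
    simpa using h'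
  have h2 : HasDerivAt (fun x : ℝ => (x - c)^2) (2 * (x - c)) x := by
    have : HasDerivAt (fun x : ℝ => (x - c)^2) (((2:ℕ):ℝ) * (x - c) ^ (2 - 1) * 1) x :=
      ((hasDerivAt_id x).sub_const c).pow 2
    simpa [mul_comm] using this
  have h3 : HasDerivAt (Ffun c) (c * 1 + (2*(x-c) - 2*|x-c|)/4) x := by
    apply HasDerivAt.congr_of_eventuallyEq
      (((((hasDerivAt_id x).const_mul c).sub_const (c^2/2)).add ((h2.sub h1).div_const 4)))
    filter_upwards with u; rw [Ffun]; simp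
  convert h3 using 1
  rcases le_total x c with h | h
  · rw [abs_of_nonpos (by linarith), min_eq_left h]; ring
  · rw [abs_of_nonneg (by linarith), min_eq_right h]; ring
section
variable (ℓ : ℝ)

lemma continuous_gfun : Continuous (gfun ℓ) := by
  have : (gfun ℓ) = fun x => 2 * min x (ℓ/2) - min (x-1) (ℓ/2) - min (x+1) (ℓ/2) := by
    funext x; exact gfun_eq_min ℓ x
  rw [this]
  fun_prop

lemma gfun_nonneg (x : ℝ) : 0 ≤ gfun ℓ x := by rw [gfun_eq_max]; exact le_max_left _ _

lemma gfun_zero_left {x : ℝ} (h : x ≤ ℓ/2 - 1) : gfun ℓ x = 0 := by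
  rw [gfun_eq_max, max_eq_left]
  rw [abs_of_nonpos (by linarith)]; linarith

lemma gfun_zero_right {x : ℝ} (h : ℓ/2 + 1 ≤ x) : gfun ℓ x = 0 := by
  rw [gfun_eq_max, max_eq_left]
  rw [abs_of_nonneg (by linarith)]; linarith

lemma gfun_pos {x : ℝ} (h1 : ℓ/2 - 1 < x) (h2 : x < ℓ/2 + 1) : 0 < gfun ℓ x := by
  rw [gfun_eq_max]
  apply lt_max_of_lt_right
  have : |x - ℓ/2| < 1 := abs_sub_lt_iff.mpr ⟨by linarith, by linarith⟩
  linarith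

noncomputable def Hfun (c x : ℝ) : ℝ := 2 * Ffun c x - Ffun c (x-1) - Ffun c (x+1)

lemma hasDerivAt_Hfun (x : ℝ) : HasDerivAt (Hfun (ℓ/2)) (gfun ℓ x) x := by
  have h1 := (hasDerivAt_Ffun (ℓ/2) x).const_mul 2
  have h2 := (hasDerivAt_Ffun (ℓ/2) (x-1)).comp x ((hasDerivAt_id x).sub_const 1)
  have h3 := (hasDerivAt_Ffun (ℓ/2) (x+1)).comp x ((hasDerivAt_id x).add_const 1)
  have h4 := (h1.sub h2).sub h3
  have : HasDerivAt (Hfun (ℓ/2))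
      (2 * min x (ℓ/2) - min (x-1) (ℓ/2) * 1 - min (x+1) (ℓ/2) * 1) x := by
    apply h4.congr_of_eventuallyEq
    filter_upwards with u; rw [Hfun]; simp
  rw [gfun_eq_min]
  simpa using this

lemma integral_gfun_bump (hℓ : 2 < ℓ) :
    ∫ x in (ℓ/2 - 1)..(ℓ/2 + 1), gfun ℓ x = 1 := by
  rw [intervalIntegral.integral_eq_sub_of_hasDerivAt
    (fun x _ => hasDerivAt_Hfun ℓ x)
    ((continuous_gfun ℓ).continuousOn.intervalIntegrable)]
  set c := ℓ/2 with hc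
  have F0 : Ffun c c = c^2/2 := by
    rw [Ffun]; rw [show c - c = (0:ℝ) by ring]; norm_num; ring
  have F1 : Ffun c (c+1) = c^2/2 + c := by
    rw [Ffun]; rw [show c + 1 - c = (1:ℝ) by ring]; norm_num; ring
  have F2 : Ffun c (c+2) = c^2/2 + 2*c := by
    rw [Ffun]; rw [show c + 2 - c = (2:ℝ) by ring]; norm_num; ring
  have Fm1 : Ffun c (c-1) = c^2/2 - c + 1/2 := by
    rw [Ffun]; rw [show c - 1 - c = (-1:ℝ) by ring]; norm_num; ring
  have Fm2 : Ffun c (c-2) = c^2/2 - 2*c + 2 := by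
    rw [Ffun]; rw [show c - 2 - c = (-2:ℝ) by ring]; norm_num; ring
  rw [Hfun, Hfun]
  rw [show c + 1 - 1 = c by ring, show c - 1 - 1 = c - 2 by ring,
    show c + 1 + 1 = c + 2 by ring, show c - 1 + 1 = c by ring]
  rw [F0, F1, F2, Fm1, Fm2]
  ring
end

noncomputable def artanh (u : ℝ) : ℝ := (Real.log (1+u) - Real.log (1-u))/2

lemma artanh_neg' (u : ℝ) : _root_.artanh (-u) = - _root_.artanh u := by
  unfold _root_.artanh
  rw [show (1:ℝ) + -u = 1 - u by ring, show (1:ℝ) - -u = 1 + u by ring]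
  ring

lemma artanh_nonneg {u : ℝ} (h0 : 0 ≤ u) (h1 : u < 1) : 0 ≤ _root_.artanh u := by
  unfold _root_.artanh
  have := Real.log_le_log (by linarith : (0:ℝ) < 1 - u) (by linarith : (1:ℝ) - u ≤ 1 + u)
  linarith

lemma hasDerivAt_artanh {u : ℝ} (h0 : -1 < u) (h1 : u < 1) :
    HasDerivAt _root_.artanh (1/(1-u^2)) u := by
  have e1 : HasDerivAt (fun x : ℝ => Real.log (1+x)) ((1+u)⁻¹ * 1) u := by
    exact (Real.hasDerivAt_log (by linarith)).comp u ((hasDerivAt_id u).const_add 1)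
  have e2 : HasDerivAt (fun x : ℝ => Real.log (1-x)) ((1-u)⁻¹ * (-1)) u := by
    exact (Real.hasDerivAt_log (by linarith)).comp u ((hasDerivAt_id u).const_sub 1)
  have h3 := (e1.sub e2).div_const 2
  have : HasDerivAt _root_.artanh (((1+u)⁻¹ * 1 - (1-u)⁻¹ * (-1))/2) u := by
    apply h3.congr_of_eventuallyEq; filter_upwards with x; rw [_root_.artanh]; rfl
  convert this using 1
  have hn1 : (1:ℝ) + u ≠ 0 := by linarith
  have hn2 : (1:ℝ) - u ≠ 0 := by linarith
  have hn3 : (1:ℝ) - u^2 ≠ 0 := by nlinarith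
  field_simp
  ring

lemma tanh_eq_exp (y : ℝ) : Real.tanh y = (exp (2*y) - 1)/(exp (2*y) + 1) := by
  rw [Real.tanh_eq_sinh_div_cosh, Real.sinh_eq, Real.cosh_eq,
    show 2*y = y + y by ring, Real.exp_add, Real.exp_neg]
  have h := Real.exp_pos y
  have h2 : rexp y + (rexp y)⁻¹ > 0 := by positivity
  have h3 : rexp y * rexp y + 1 > 0 := by positivity
  rw [div_div_div_cancel_right₀]
  · field_simp
  · positivity

lemma tanh_artanh {b : ℝ} (h0 : -1 < b) (h1 : b < 1) : Real.tanh (_root_.artanh b) = b := by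
  rw [tanh_eq_exp, _root_.artanh,
    show 2 * ((Real.log (1+b) - Real.log (1-b))/2) = Real.log (1+b) - Real.log (1-b) by ring,
    Real.exp_sub, Real.exp_log (by linarith), Real.exp_log (by linarith)]
  have hn2 : (1:ℝ) - b ≠ 0 := by linarith
  have hd : (1+b)/(1-b) + 1 ≠ 0 := by
    have : (1+b)/(1-b) > 0 := div_pos (by linarith) (by linarith)
    linarith
  field_simp
  ring

lemma hasDerivAt_tanh (y : ℝ) : HasDerivAt Real.tanh (1/Real.cosh y^2) y := by
  have h := (Real.hasDerivAt_sinh y).div (Real.hasDerivAt_cosh y) (Real.cosh_pos y).ne'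
  have : HasDerivAt Real.tanh
      ((Real.cosh y * Real.cosh y - Real.sinh y * Real.sinh y) / Real.cosh y ^ 2) y := by
    apply h.congr_of_eventuallyEq; filter_upwards with x; rw [Real.tanh_eq_sinh_div_cosh]; rfl
  convert this using 1
  have := Real.cosh_sq_sub_sinh_sq y
  have h2 : Real.cosh y * Real.cosh y - Real.sinh y * Real.sinh y = 1 := by
    nlinarith [Real.cosh_sq_sub_sinh_sq y]
  rw [h2]

lemma tanh_monotone : Monotone Real.tanh := by
  apply monotone_of_deriv_nonneg
  · exact fun x => (hasDerivAt_tanh x).differentiableAt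
  · intro x
    rw [(hasDerivAt_tanh x).deriv]
    positivity

lemma tanh_lipschitz {u v : ℝ} (h : u ≤ v) : Real.tanh v - Real.tanh u ≤ v - u := by
  have hmono : Monotone (fun x => x - Real.tanh x) := by
    apply monotone_of_deriv_nonneg
    · exact fun x => (differentiable_id x).sub (hasDerivAt_tanh x).differentiableAt
    · intro x
      have hd : HasDerivAt (fun x => x - Real.tanh x) (1 - 1/Real.cosh x^2) x :=
        (hasDerivAt_id x).sub (hasDerivAt_tanh x)
      rw [hd.deriv]
      have h1 := Real.one_le_cosh x
      have h2 : (1:ℝ) ≤ Real.cosh x ^ 2 := by nlinarith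
      have : 1/Real.cosh x^2 ≤ 1 := by
        rw [div_le_one (by positivity)]; exact h2
      linarith
  have := hmono h
  simp only at this
  linarith

lemma tanh_le_self {x : ℝ} (h : 0 ≤ x) : Real.tanh x ≤ x := by
  have := tanh_lipschitz h
  simp [Real.tanh_zero] at this
  linarith

lemma lemA {f : ℝ → ℝ} {A B y : ℝ} (hAB : A ≤ B) (hf : ContinuousOn f (Icc A B))
    (hA : y ≤ f A) (hB : f B < y) :
    ∃ t ∈ Ico A B, f t = y ∧ ∀ x, t < x → x ≤ B → f x < y := by
  set S := {x ∈ Icc A B | y ≤ f x} with hS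
  have hSsub : S ⊆ Icc A B := fun x hx => hx.1
  have hSne : S.Nonempty := ⟨A, ⟨left_mem_Icc.mpr hAB, hA⟩⟩
  have hSclosed : IsClosed S := by
    have := hf.preimage_isClosed_of_isClosed isClosed_Icc (isClosed_Ici (a := y))
    exact this
  have hScompact : IsCompact S := isCompact_Icc.of_isClosed_subset hSclosed hSsub
  set t := sSup S with ht
  have htS : t ∈ S := hScompact.sSup_mem hSne
  have htIcc : t ∈ Icc A B := hSsub htS
  have htB : t ≠ B := fun h => absurd htS.2 (by rw [h]; exact not_le.mpr hB)
  have htlt : t < B := lt_of_le_of_ne htIcc.2 htB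
  have hafter : ∀ x, t < x → x ≤ B → f x < y := by
    intro x hx hxB
    by_contra hc
    push_neg at hc
    have hxS : x ∈ S := ⟨⟨htIcc.1.trans hx.le, hxB⟩, hc⟩
    exact absurd (le_csSup hScompact.bddAbove hxS) (not_le.mpr hx)
  refine ⟨t, ⟨htIcc.1, htlt⟩, ?_, hafter⟩
  refine le_antisymm ?_ htS.2
  have hne : (𝓝[Ioc t B] t).NeBot := by
    rw [nhdsWithin_Ioc_eq_nhdsGT htlt]; infer_instance
  have htend : Tendsto f (𝓝[Ioc t B] t) (𝓝 (f t)) :=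
    (hf t htIcc).mono_left (nhdsWithin_mono _ (Ioc_subset_Icc_self.trans
      (Icc_subset_Icc htIcc.1 le_rfl)))
  exact le_of_tendsto htend (eventually_nhdsWithin_of_forall
    (fun x hx => (hafter x hx.1 hx.2).le))

lemma lemA' {f : ℝ → ℝ} {A B y : ℝ} (hAB : A ≤ B) (hf : ContinuousOn f (Icc A B))
    (hA : f A < y) (hB : y ≤ f B) :
    ∃ t ∈ Ioc A B, f t = y ∧ ∀ x, A ≤ x → x < t → f x < y := by
  set S := {x ∈ Icc A B | y ≤ f x} with hS
  have hSsub : S ⊆ Icc A B := fun x hx => hx.1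
  have hSne : S.Nonempty := ⟨B, ⟨right_mem_Icc.mpr hAB, hB⟩⟩
  have hSclosed : IsClosed S := by
    have := hf.preimage_isClosed_of_isClosed isClosed_Icc (isClosed_Ici (a := y))
    exact this
  have hScompact : IsCompact S := isCompact_Icc.of_isClosed_subset hSclosed hSsub
  set t := sInf S with ht
  have htS : t ∈ S := hScompact.sInf_mem hSne
  have htIcc : t ∈ Icc A B := hSsub htS
  have htA : t ≠ A := fun h => absurd htS.2 (by rw [h]; exact not_le.mpr hA)
  have htgt : A < t := lt_of_le_of_ne htIcc.1 (Ne.symm htA)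
  have hbefore : ∀ x, A ≤ x → x < t → f x < y := by
    intro x hxA hx
    by_contra hc
    push_neg at hc
    have hxS : x ∈ S := ⟨⟨hxA, hx.le.trans htIcc.2⟩, hc⟩
    exact absurd (csInf_le hScompact.bddBelow hxS) (not_le.mpr hx)
  refine ⟨t, ⟨htgt, htIcc.2⟩, ?_, hbefore⟩
  refine le_antisymm ?_ htS.2
  have hne : (𝓝[Ico A t] t).NeBot := by
    rw [nhdsWithin_Ico_eq_nhdsLT htgt]; infer_instance
  have htend : Tendsto f (𝓝[Ico A t] t) (𝓝 (f t)) :=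
    (hf t htIcc).mono_left (nhdsWithin_mono _ ((Ico_subset_Icc_self).trans
      (Icc_subset_Icc le_rfl htIcc.2)))
  exact le_of_tendsto htend (eventually_nhdsWithin_of_forall
    (fun x hx => (hbefore x hx.1 hx.2).le))

lemma deriv_nonpos_of_lt_right {f : ℝ → ℝ} {t u d : ℝ} (h : HasDerivAt f d t) (htu : t < u)
    (hlt : ∀ x, t < x → x ≤ u → f x < f t) : d ≤ 0 := by
  rw [hasDerivAt_iff_tendsto_slope] at h
  have hne : (𝓝[Ioc t u] t).NeBot := by
    rw [nhdsWithin_Ioc_eq_nhdsGT htu]; infer_instance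
  have h2 : Tendsto (slope f t) (𝓝[Ioc t u] t) (𝓝 d) :=
    h.mono_left (nhdsWithin_mono _ (fun x hx => (ne_of_gt hx.1 : x ≠ t)))
  apply le_of_tendsto h2
  apply eventually_nhdsWithin_of_forall
  intro x hx
  rw [slope_def_field]
  have h3 : f x - f t < 0 := sub_neg.mpr (hlt x hx.1 hx.2)
  have h4 : x - t > 0 := sub_pos.mpr hx.1
  exact div_nonpos_of_nonpos_of_nonneg h3.le h4.le

lemma deriv_nonneg_of_gt_right {f : ℝ → ℝ} {t u d : ℝ} (h : HasDerivAt f d t) (htu : t < u)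
    (hgt : ∀ x, t < x → x ≤ u → f t < f x) : 0 ≤ d := by
  have := deriv_nonpos_of_lt_right (h.neg) htu (fun x h1 h2 => neg_lt_neg (hgt x h1 h2))
  linarith

lemma deriv_nonneg_of_lt_left {f : ℝ → ℝ} {t l d : ℝ} (h : HasDerivAt f d t) (hlt : l < t)
    (hbefore : ∀ x, l ≤ x → x < t → f x < f t) : 0 ≤ d := by
  rw [hasDerivAt_iff_tendsto_slope] at h
  have hne : (𝓝[Ico l t] t).NeBot := by
    rw [nhdsWithin_Ico_eq_nhdsLT hlt]; infer_instance
  have h2 : Tendsto (slope f t) (𝓝[Ico l t] t) (𝓝 d) :=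
    h.mono_left (nhdsWithin_mono _ (fun x hx => (ne_of_lt hx.2 : x ≠ t)))
  apply ge_of_tendsto h2
  apply eventually_nhdsWithin_of_forall
  intro x hx
  rw [slope_def_field]
  have h3 : f x - f t < 0 := sub_neg.mpr (hbefore x hx.1 hx.2)
  have h4 : x - t < 0 := sub_neg.mpr hx.2
  rw [div_nonneg_iff]
  right
  exact ⟨h3.le, h4.le⟩

lemma one_sub_tanh_sq (y : ℝ) : 1 - Real.tanh y ^ 2 = (Real.cosh y ^ 2)⁻¹ := by
  rw [Real.tanh_eq_sinh_div_cosh, div_pow]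
  have hc : Real.cosh y ^ 2 ≠ 0 := by positivity
  field_simp
  linarith [Real.cosh_sq_sub_sinh_sq y]

/-- Theorem 3.1, (3.9.1): `l · j^{(l)} → tanh(βλ/2)` as `l → ∞`. -/
theorem stationary_current_limit (β lam : ℝ) (hβ : 0 < β) (hlam : 0 < lam) :
    ∀ ε > (0 : ℝ), ∃ L > (4 : ℝ), ∀ ℓ > L,
      ∀ j : ℝ, ∀ m : ℝ → ℝ, IsStationarySolution β lam ℓ j m →
        |ℓ * j - Real.tanh (β * lam / 2)| < ε := by
  intro ε hε
  set K := Real.cosh (β*lam) ^ 2 with hK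
  have hbl : 0 < β * lam := by positivity
  have hK1 : (1:ℝ) ≤ K := by nlinarith [Real.one_le_cosh (β*lam)]
  have hK0 : (0:ℝ) < K := by linarith
  have hq0 : (0:ℝ) ≤ (β*lam*K + 2)/ε := by positivity
  refine ⟨5 + (β*lam*K + 2)/ε, by linarith, ?_⟩
  intro ℓ hℓ j m hsol
  obtain ⟨⟨hm0, hDer⟩, hmℓ⟩ := hsol
  have hquot : (0:ℝ) ≤ (β*lam*K + 2)/ε := by positivity
  have hℓ5 : 5 < ℓ := by linarith
  have hεℓ : β*lam*K + 2 < ε * (ℓ - 2) := by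
    have h1 : (β*lam*K+2)/ε < ℓ - 2 := by linarith
    calc β*lam*K + 2 = ((β*lam*K+2)/ε)*ε := by field_simp
    _ < (ℓ-2)*ε := by exact mul_lt_mul_of_pos_right h1 hε
    _ = ε * (ℓ-2) := by ring
  have hmcont : ContinuousOn m (Icc 0 ℓ) := fun x hx =>
    ((hDer x hx).continuousAt).continuousWithinAt
  have hsub1 : (0:ℝ) ≤ ℓ/2 - 1 := by linarith
  have hsub2 : ℓ/2 + 1 ≤ ℓ := by linarith
  -- STEP 1 : j > 0
  have hjpos : 0 < j := by
    rcases lt_trichotomy j 0 with hj | hj | hj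
    · exfalso
      have hmnonneg : ∀ x ∈ Icc (0:ℝ) ℓ, 0 ≤ m x := by
        intro x₁ hx₁
        by_contra hneg; push_neg at hneg
        obtain ⟨t, htmem, htval, hafter⟩ :=
          lemA (f := m) (A := 0) (B := x₁) (y := 0) hx₁.1
            (hmcont.mono (Icc_subset_Icc le_rfl hx₁.2)) (le_of_eq hm0.symm) hneg
        have htIcc : t ∈ Icc (0:ℝ) ℓ := ⟨htmem.1, htmem.2.le.trans hx₁.2⟩
        have hd := hDer t htIcc
        have hle := deriv_nonpos_of_lt_right hd htmem.2
          (fun x h1 h2 => by rw [htval]; exact hafter x h1 h2)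
        rw [htval] at hle
        have hg := gfun_nonneg ℓ t
        nlinarith
      have key : m ℓ - m (ℓ/2+1) = (ℓ - (ℓ/2+1)) * (-2*j) := by
        have h1 : ∀ x ∈ uIcc (ℓ/2+1) ℓ, HasDerivAt m (-2*j) x := by
          intro x hx
          rw [uIcc_of_le hsub2] at hx
          have hd := hDer x ⟨by linarith [hx.1], hx.2⟩
          rw [gfun_zero_right ℓ hx.1] at hd
          simpa using hd
        have h2 := intervalIntegral.integral_eq_sub_of_hasDerivAt h1 intervalIntegrable_const
        rw [intervalIntegral.integral_const] at h2
        rw [← h2, smul_eq_mul]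
      rw [hmℓ] at key
      have hmc1 := hmnonneg (ℓ/2+1) ⟨by linarith, hsub2⟩
      nlinarith
    · exfalso
      subst hj
      have ftcl : m (ℓ/2-1) = 0 := by
        have h1 : ∀ x ∈ uIcc (0:ℝ) (ℓ/2-1), HasDerivAt m 0 x := by
          intro x hx
          rw [uIcc_of_le hsub1] at hx
          have hd := hDer x ⟨hx.1, by linarith [hx.2]⟩
          rw [gfun_zero_left ℓ hx.2] at hd
          simpa using hd
        have h2 := intervalIntegral.integral_eq_sub_of_hasDerivAt h1 intervalIntegrable_const
        rw [intervalIntegral.integral_const] at h2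
        rw [hm0] at h2
        simpa using h2.symm
      have ftcr : m (ℓ/2+1) = 0 := by
        have h1 : ∀ x ∈ uIcc (ℓ/2+1) ℓ, HasDerivAt m 0 x := by
          intro x hx
          rw [uIcc_of_le hsub2] at hx
          have hd := hDer x ⟨by linarith [hx.1], hx.2⟩
          rw [gfun_zero_right ℓ hx.1] at hd
          simpa using hd
        have h2 := intervalIntegral.integral_eq_sub_of_hasDerivAt h1 intervalIntegrable_const
        rw [intervalIntegral.integral_const] at h2
        rw [hmℓ] at h2
        simpa using h2
      obtain ⟨ξ, hξ, hξ0⟩ := exists_hasDerivAt_eq_zero (f := m)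
        (f' := fun x => -2*0 + β*lam*(1 - m x^2) * gfun ℓ x)
        (by linarith : ℓ/2-1 < ℓ/2+1)
        (hmcont.mono (Icc_subset_Icc hsub1 hsub2)) (by rw [ftcl, ftcr])
        (fun x hx => hDer x ⟨by linarith [hx.1], by linarith [hx.2]⟩)
      have hgξ := gfun_pos ℓ hξ.1 hξ.2
      have hsq : m ξ^2 = 1 := by
        have : β*lam*(1 - m ξ^2) * gfun ℓ ξ = 0 := by linarith
        rcases mul_eq_zero.mp this with h | h
        · rcases mul_eq_zero.mp h with h' | h'
          · exact absurd h' (by positivity)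
          · nlinarith
        · exact absurd h (by linarith)
      have hcases : m ξ = 1 ∨ m ξ = -1 := by
        have hfac : (m ξ - 1) * (m ξ + 1) = 0 := by nlinarith
        rcases mul_eq_zero.mp hfac with h | h
        · left; linarith
        · right; linarith
      rcases hcases with h1 | h1
      · obtain ⟨t, htmem, htval, hafter⟩ := lemA (f := m) (A := ξ) (B := ℓ/2+1) (y := 1/2)
          (by linarith [hξ.2]) (hmcont.mono (Icc_subset_Icc (by linarith [hξ.1]) hsub2))
          (by rw [h1]; norm_num) (by rw [ftcr]; norm_num)
        have htIcc : t ∈ Icc (0:ℝ) ℓ :=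
          ⟨by linarith [htmem.1, hξ.1], by linarith [htmem.2]⟩
        have hd := hDer t htIcc
        have hle := deriv_nonpos_of_lt_right hd htmem.2
          (fun x hx1 hx2 => by rw [htval]; exact hafter x hx1 hx2)
        have hgt : 0 < gfun ℓ t := gfun_pos ℓ (by linarith [htmem.1, hξ.1]) htmem.2
        rw [htval] at hle
        norm_num at hle
        nlinarith [mul_pos hbl hgt]
      · obtain ⟨t, htmem, htval, hafter⟩ := lemA (f := m) (A := ℓ/2-1) (B := ξ) (y := -(1/2))
          (by linarith [hξ.1]) (hmcont.mono (Icc_subset_Icc hsub1 (by linarith [hξ.2])))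
          (by rw [ftcl]; norm_num) (by rw [h1]; norm_num)
        have htne : t ≠ ℓ/2 - 1 := by
          intro he; rw [he, ftcl] at htval; norm_num at htval
        have htgt : ℓ/2 - 1 < t := lt_of_le_of_ne htmem.1 (Ne.symm htne)
        have htIcc : t ∈ Icc (0:ℝ) ℓ :=
          ⟨by linarith [htmem.1], by linarith [htmem.2, hξ.2]⟩
        have hd := hDer t htIcc
        have hle := deriv_nonpos_of_lt_right hd htmem.2
          (fun x hx1 hx2 => by rw [htval]; exact hafter x hx1 hx2)
        have hgt : 0 < gfun ℓ t := gfun_pos ℓ htgt (by linarith [htmem.2, hξ.2])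
        rw [htval] at hle
        norm_num at hle
        nlinarith [mul_pos hbl hgt]
    · exact hj

  -- STEP 2: -1 < m < 1 on [0, ℓ]
  have hm_lt1 : ∀ x ∈ Icc (0:ℝ) ℓ, m x < 1 := by
    intro x₁ hx₁
    by_contra hge; push_neg at hge
    obtain ⟨t, htmem, htval, hbefore⟩ := lemA' (f := m) (A := 0) (B := x₁) (y := 1)
      hx₁.1 (hmcont.mono (Icc_subset_Icc le_rfl hx₁.2)) (by rw [hm0]; norm_num) hge
    have htIcc : t ∈ Icc (0:ℝ) ℓ := ⟨htmem.1.le, htmem.2.trans hx₁.2⟩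
    have hd := hDer t htIcc
    have hge0 := deriv_nonneg_of_lt_left hd htmem.1
      (fun x hx1 hx2 => by rw [htval]; exact hbefore x hx1 hx2)
    rw [htval] at hge0
    norm_num at hge0
    linarith
  have hm_gt : ∀ x ∈ Icc (0:ℝ) ℓ, -1 < m x := by
    intro x₁ hx₁
    by_contra hge; push_neg at hge
    obtain ⟨t, htmem, htval, hafter⟩ := lemA (f := fun x => -(m x)) (A := x₁) (B := ℓ) (y := 1)
      hx₁.2 ((hmcont.mono (Icc_subset_Icc hx₁.1 le_rfl)).neg) (by linarith)
      (by simp [hmℓ])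
    have htIcc : t ∈ Icc (0:ℝ) ℓ := ⟨hx₁.1.trans htmem.1, htmem.2.le⟩
    have hmt : m t = -1 := by
      have h := htval; linarith
    have hd := (hDer t htIcc).neg
    have hle := deriv_nonpos_of_lt_right hd htmem.2
      (fun x hx1 hx2 => by show -(m x) < -(m t); rw [htval]; exact hafter x hx1 hx2)
    rw [hmt] at hle
    norm_num at hle
    linarith
  have hfrac : ∀ x ∈ Icc (0:ℝ) ℓ, 0 < 1 - m x^2 := fun x hx => by
    nlinarith [hm_lt1 x hx, hm_gt x hx]
  -- FTC for the flat parts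
  have ftcl : m (ℓ/2-1) = -(j*(ℓ-2)) := by
    have h1 : ∀ x ∈ uIcc (0:ℝ) (ℓ/2-1), HasDerivAt m (-2*j) x := by
      intro x hx
      rw [uIcc_of_le hsub1] at hx
      have hd := hDer x ⟨hx.1, by linarith [hx.2]⟩
      rw [gfun_zero_left ℓ hx.2] at hd
      simpa using hd
    have h2 := intervalIntegral.integral_eq_sub_of_hasDerivAt h1 intervalIntegrable_const
    rw [intervalIntegral.integral_const, hm0, smul_eq_mul] at h2
    rw [← sub_zero (m (ℓ/2-1)), ← h2]; ring
  have ftcr : m (ℓ/2+1) = j*(ℓ-2) := by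
    have h1 : ∀ x ∈ uIcc (ℓ/2+1) ℓ, HasDerivAt m (-2*j) x := by
      intro x hx
      rw [uIcc_of_le hsub2] at hx
      have hd := hDer x ⟨by linarith [hx.1], hx.2⟩
      rw [gfun_zero_right ℓ hx.1] at hd
      simpa using hd
    have h2 := intervalIntegral.integral_eq_sub_of_hasDerivAt h1 intervalIntegrable_const
    rw [intervalIntegral.integral_const, hmℓ, smul_eq_mul] at h2
    have : m (ℓ/2+1) = -((ℓ - (ℓ/2+1)) * (-2*j)) := by linarith
    rw [this]; ring
  set b := j*(ℓ-2) with hbdef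
  have hbpos : 0 < b := mul_pos hjpos (by linarith)
  have hblt1 : b < 1 := by
    have := hm_lt1 (ℓ/2+1) ⟨by linarith, hsub2⟩
    rwa [ftcr] at this
  -- derivative of artanh ∘ m
  have hphi : ∀ x ∈ Icc (0:ℝ) ℓ, HasDerivAt (fun y => _root_.artanh (m y))
      (β*lam * gfun ℓ x - 2*j*(1 - m x^2)⁻¹) x := by
    intro x hx
    have h1 : HasDerivAt (fun y => _root_.artanh (m y))
        (1 / (1 - m x ^ 2) * (-2 * j + β * lam * (1 - m x ^ 2) * gfun ℓ x)) x :=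
      (hasDerivAt_artanh (hm_gt x hx) (hm_lt1 x hx)).comp x (hDer x hx)
    convert h1 using 1
    have hne := (hfrac x hx).ne'
    field_simp
    ring
  have hwcont : ContinuousOn (fun x => (1 - m x^2)⁻¹) (Icc 0 ℓ) := by
    apply ContinuousOn.inv₀
    · exact continuousOn_const.sub (hmcont.pow 2)
    · exact fun x hx => (hfrac x hx).ne'
  have hpsicont : ContinuousOn (fun x => β*lam * gfun ℓ x - 2*j*(1 - m x^2)⁻¹) (Icc 0 ℓ) :=
    (continuousOn_const.mul (continuous_gfun ℓ).continuousOn).sub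
      (continuousOn_const.mul hwcont)
  -- FTC for _root_.artanh ∘ m on subintervals
  have ftcphi : ∀ x1 x2 : ℝ, 0 ≤ x1 → x1 ≤ x2 → x2 ≤ ℓ →
      _root_.artanh (m x2) - _root_.artanh (m x1) =
        β*lam * (∫ x in x1..x2, gfun ℓ x) - 2*j*(∫ x in x1..x2, (1 - m x^2)⁻¹) := by
    intro x1 x2 h1 h2 h3
    have hsub : Icc x1 x2 ⊆ Icc 0 ℓ := Icc_subset_Icc h1 h3
    have hFTC := intervalIntegral.integral_eq_sub_of_hasDerivAt
      (f := fun y => _root_.artanh (m y))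
      (f' := fun x => β*lam * gfun ℓ x - 2*j*(1 - m x^2)⁻¹)
      (fun x hx => hphi x (hsub (by rwa [uIcc_of_le h2] at hx)))
      ((hpsicont.mono (by rw [uIcc_of_le h2]; exact hsub)).intervalIntegrable)
    have hint1 : IntervalIntegrable (fun x => β*lam * gfun ℓ x) MeasureTheory.volume x1 x2 :=
      ((continuous_const.mul (continuous_gfun ℓ)).intervalIntegrable x1 x2)
    have hint2 : IntervalIntegrable (fun x => 2*j*(1 - m x^2)⁻¹) MeasureTheory.volume x1 x2 := by
      apply ContinuousOn.intervalIntegrable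
      apply ContinuousOn.mono (continuousOn_const.mul hwcont)
      rw [uIcc_of_le h2]; exact hsub
    rw [intervalIntegral.integral_sub hint1 hint2,
      intervalIntegral.integral_const_mul, intervalIntegral.integral_const_mul] at hFTC
    linarith [hFTC]
  -- integrability facts on the bump
  have hintw : ∀ x1 x2 : ℝ, 0 ≤ x1 → x1 ≤ x2 → x2 ≤ ℓ →
      IntervalIntegrable (fun x => (1 - m x^2)⁻¹) MeasureTheory.volume x1 x2 := by
    intro x1 x2 h1 h2 h3
    apply ContinuousOn.intervalIntegrable
    apply hwcont.mono
    rw [uIcc_of_le h2]; exact Icc_subset_Icc h1 h3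
  have hintg : ∀ x1 x2 : ℝ, IntervalIntegrable (gfun ℓ) MeasureTheory.volume x1 x2 :=
    fun x1 x2 => (continuous_gfun ℓ).intervalIntegrable x1 x2
  -- main identity
  set E := ∫ x in (ℓ/2-1)..(ℓ/2+1), (1 - m x^2)⁻¹ with hEdef
  have hmain : 2 * _root_.artanh b = β*lam - 2*j*E := by
    have h := ftcphi (ℓ/2-1) (ℓ/2+1) hsub1 (by linarith) hsub2
    rw [ftcl, ftcr, integral_gfun_bump ℓ (by linarith), artanh_neg'] at h
    rw [← hEdef] at h
    linarith [h]
  have hE0 : 0 ≤ E := by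
    apply intervalIntegral.integral_nonneg (by linarith)
    intro u hu
    have : 0 < 1 - m u ^2 := hfrac u ⟨by linarith [hu.1], by linarith [hu.2]⟩
    positivity
  have hup1 : _root_.artanh b ≤ β*lam/2 := by nlinarith [mul_nonneg hjpos.le hE0]
  have hble : b ≤ _root_.artanh b := by
    have h := tanh_le_self (_root_.artanh_nonneg hbpos.le hblt1)
    rwa [_root_.tanh_artanh (by linarith) hblt1] at h
  have hb2 : b ≤ β*lam/2 := hble.trans hup1
  -- pointwise bound for _root_.artanh (m x) on the bump
  have hphibound : ∀ x ∈ Icc (ℓ/2-1) (ℓ/2+1), |_root_.artanh (m x)| ≤ β*lam := by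
    intro x hx
    have hxI : x ∈ Icc (0:ℝ) ℓ := ⟨by linarith [hx.1], by linarith [hx.2]⟩
    have hga : 0 ≤ ∫ y in (ℓ/2-1)..x, gfun ℓ y :=
      intervalIntegral.integral_nonneg hx.1 (fun u _ => gfun_nonneg ℓ u)
    have hgb : 0 ≤ ∫ y in x..(ℓ/2+1), gfun ℓ y :=
      intervalIntegral.integral_nonneg hx.2 (fun u _ => gfun_nonneg ℓ u)
    have hsplit : (∫ y in (ℓ/2-1)..x, gfun ℓ y) + (∫ y in x..(ℓ/2+1), gfun ℓ y) = 1 := by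
      rw [intervalIntegral.integral_add_adjacent_intervals (hintg _ _) (hintg _ _),
        integral_gfun_bump ℓ (by linarith)]
    have hwa : 0 ≤ ∫ y in (ℓ/2-1)..x, (1 - m y^2)⁻¹ := by
      apply intervalIntegral.integral_nonneg hx.1
      intro u hu
      have : 0 < 1 - m u ^2 := hfrac u ⟨by linarith [hu.1], by linarith [hu.2, hx.2]⟩
      positivity
    have hwb : 0 ≤ ∫ y in x..(ℓ/2+1), (1 - m y^2)⁻¹ := by
      apply intervalIntegral.integral_nonneg hx.2
      intro u hu
      have : 0 < 1 - m u ^2 := hfrac u ⟨by linarith [hu.1, hx.1], by linarith [hu.2]⟩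
      positivity
    have hup : _root_.artanh (m x) - _root_.artanh (m (ℓ/2-1)) ≤ β*lam * ∫ y in (ℓ/2-1)..x, gfun ℓ y := by
      rw [ftcphi (ℓ/2-1) x hsub1 hx.1 hxI.2]
      nlinarith [mul_nonneg hjpos.le hwa]
    have hdn : _root_.artanh (m (ℓ/2+1)) - _root_.artanh (m x) ≤ β*lam * ∫ y in x..(ℓ/2+1), gfun ℓ y := by
      rw [ftcphi x (ℓ/2+1) hxI.1 hx.2 hsub2]
      nlinarith [mul_nonneg hjpos.le hwb]
    rw [ftcl, artanh_neg'] at hup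
    rw [ftcr] at hdn
    have hab : 0 ≤ _root_.artanh b := _root_.artanh_nonneg hbpos.le hblt1
    have hga1 : β*lam * (∫ y in (ℓ/2-1)..x, gfun ℓ y) ≤ β*lam := by
      nlinarith
    have hgb1 : β*lam * (∫ y in x..(ℓ/2+1), gfun ℓ y) ≤ β*lam := by
      nlinarith
    rw [abs_le]
    constructor
    · linarith
    · linarith
  -- bound on the integrand (1-m²)⁻¹ over the bump
  have hwle : ∀ x ∈ Icc (ℓ/2-1) (ℓ/2+1), (1 - m x^2)⁻¹ ≤ K := by
    intro x hx
    have hxI : x ∈ Icc (0:ℝ) ℓ := ⟨by linarith [hx.1], by linarith [hx.2]⟩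
    have heq : 1 - m x^2 = (Real.cosh (_root_.artanh (m x)) ^ 2)⁻¹ := by
      conv_lhs => rw [← _root_.tanh_artanh (hm_gt x hxI) (hm_lt1 x hxI)]
      exact one_sub_tanh_sq _
    rw [heq, inv_inv, hK]
    have h1 : Real.cosh (_root_.artanh (m x)) ≤ Real.cosh (β*lam) := by
      rw [Real.cosh_le_cosh]
      rw [abs_of_pos hbl]
      exact hphibound x hx
    nlinarith [Real.cosh_pos (_root_.artanh (m x))]
  have hEle : E ≤ 2*K := by
    have h := intervalIntegral.integral_mono_on (by linarith : ℓ/2-1 ≤ ℓ/2+1)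
      (hintw _ _ hsub1 (by linarith) hsub2)
      (intervalIntegrable_const (c := K)) hwle
    rw [intervalIntegral.integral_const, smul_eq_mul] at h
    calc E ≤ (ℓ/2+1 - (ℓ/2-1)) * K := h
    _ = 2*K := by ring
  -- lower bound on b
  have T := Real.tanh (β*lam/2)
  have hbT : b ≤ Real.tanh (β*lam/2) := by
    have h := tanh_monotone hup1
    rwa [_root_.tanh_artanh (by linarith) hblt1] at h
  have hD : β*lam*K/(ℓ-2) * (ℓ-2) = β*lam*K := div_mul_cancel₀ _ (by linarith)
  have hjE : j*E ≤ β*lam*K/(ℓ-2) := by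
    rw [← mul_le_mul_iff_left₀ (show (0:ℝ) < ℓ-2 by linarith), hD]
    have hkey : b * E ≤ (β*lam/2) * (2*K) :=
      mul_le_mul hb2 hEle hE0 (by positivity)
    nlinarith [hkey, hbdef]
  have hlow : Real.tanh (β*lam/2) - β*lam*K/(ℓ-2) ≤ b := by
    have h1 : β*lam/2 - β*lam*K/(ℓ-2) ≤ _root_.artanh b := by linarith
    have h2 := tanh_monotone h1
    rw [_root_.tanh_artanh (by linarith) hblt1] at h2
    have hdnn : 0 ≤ β*lam*K/(ℓ-2) :=
      div_nonneg (mul_nonneg hbl.le hK0.le) (by linarith)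
    have h3 := tanh_lipschitz (show β*lam/2 - β*lam*K/(ℓ-2) ≤ β*lam/2 by linarith)
    linarith
  -- finish
  have hlj : ℓ*j = b + 2*j := by rw [hbdef]; ring
  have hδ1 : β*lam*K/(ℓ-2) + 2/(ℓ-2) < ε := by
    rw [← add_div, div_lt_iff₀ (show (0:ℝ) < ℓ-2 by linarith)]
    linarith [hεℓ]
  have h2j : 2*j < 2/(ℓ-2) := by
    rw [lt_div_iff₀ (show (0:ℝ) < ℓ-2 by linarith)]
    nlinarith
  have hd2 : 0 < 2/(ℓ-2) := by
    apply div_pos (by norm_num) (by linarith)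
  have hdnn : 0 ≤ β*lam*K/(ℓ-2) :=
    div_nonneg (mul_nonneg hbl.le hK0.le) (by linarith)
  rw [abs_lt]
  constructor
  · linarith
  · linarith
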